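/- The code B_10, the 𝔽₄-span of the five vectors (1,1,1,1,0,0,0,0,0,0), (0,1,ω,ϖ,1,0,0,0,0,0), (0,0,0,0,0,1,1,1,1,0), (0,0,0,0,0,0,1,ω,ϖ,1), (0,1,ϖ,ω,0,0,1,ϖ,ω,0) in GF(4)^{10}, is a Hermitian self-dual [10,5,4] linear code over GF(4): it has 𝔽₄-dimension 5, equals its dual under the Hermitian inner product, and its minimum nonzero Hamming weight is 4. -/

import Mathlib

open scoped BigOperators

section Defs

variable {F : Type} [Field F] [DecidableEq F]

/-- The binary coordinate in column `j` (0-indexed), row `k`. -/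
def idx (j : Fin 10) (k : Fin 4) : Fin 40 :=
  ⟨4 * j.val + k.val, by have := j.isLt; have := k.isLt; omega⟩

/-- The map φ : GF(4) → 𝔽₂⁴, 0↦0000, 1↦0011, ω↦0101, ϖ↦0110. -/
def phi (ω : F) : F → (Fin 4 → ZMod 2) := fun x =>
  if x = 0 then ![0, 0, 0, 0]
  else if x = 1 then ![0, 0, 1, 1]
  else if x = ω then ![0, 1, 0, 1]
  else ![0, 1, 1, 0]

/-- Ĉ : the image of a quaternary code under coordinatewise φ. -/
def hatSet (ω : F) (C : Set (Fin 10 → F)) : Set (Fin 40 → ZMod 2) :=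
  { v | ∃ c ∈ C, ∀ (j : Fin 10) (k : Fin 4), v (idx j k) = phi ω (c j) k }

/-- d₄¹⁰ : binary vectors of length 40 constant on each of the ten columns. -/
def d4ten : Set (Fin 40 → ZMod 2) :=
  { v | ∀ (j : Fin 10) (k k' : Fin 4), v (idx j k) = v (idx j k') }

/-- (d₄¹⁰)₀ : the subcode of d₄¹⁰ of codewords of weight divisible by 8. -/
def d4ten0 : Set (Fin 40 → ZMod 2) :=
  { v | v ∈ d4ten ∧ 8 ∣ hammingNorm v }

/-- The generator 1000 1000 ... 1000 of e_C. -/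
def eCvec : Fin 40 → ZMod 2 := fun i => if i.val % 4 = 0 then 1 else 0

/-- The generator 1000 (×9) 0111 of e_B. -/
def eBvec : Fin 40 → ZMod 2 := fun i =>
  if i.val < 36 then (if i.val % 4 = 0 then 1 else 0)
  else (if i.val % 4 = 0 then 0 else 1)

/-- ρ_C(C) = Ĉ + (d₄¹⁰)₀ + e_C. -/
def rhoC (ω : F) (C : Set (Fin 10 → F)) : Set (Fin 40 → ZMod 2) :=
  { v | ∃ a ∈ hatSet ω C, ∃ b ∈ d4ten0,
      ∃ e ∈ ({0, eCvec} : Set (Fin 40 → ZMod 2)), v = a + b + e }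

/-- ρ_B(C) = Ĉ + (d₄¹⁰)₀ + e_B. -/
def rhoB (ω : F) (C : Set (Fin 10 → F)) : Set (Fin 40 → ZMod 2) :=
  { v | ∃ a ∈ hatSet ω C, ∃ b ∈ d4ten0,
      ∃ e ∈ ({0, eBvec} : Set (Fin 40 → ZMod 2)), v = a + b + e }

/-- The trace inner product x⋆y = Σ Tr(xᵢ ȳᵢ), computed in GF(4) (its value lies
in the prime subfield GF(2)). -/
def traceIP (x y : Fin 10 → F) : F :=
  ∑ i, ((x i * (y i) ^ 2) + (x i * (y i) ^ 2) ^ 2)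

/-- The dual of an additive code with respect to the trace inner product. -/
def addDual (C : Set (Fin 10 → F)) : Set (Fin 10 → F) :=
  { x | ∀ c ∈ C, traceIP x c = 0 }

/-- The dual of a binary code of length 40 under the standard inner product. -/
def binDual (S : Set (Fin 40 → ZMod 2)) : Set (Fin 40 → ZMod 2) :=
  { x | ∀ c ∈ S, ∑ i, x i * c i = 0 }

/-- The dual of a quaternary code under the Hermitian inner product ⟨x,y⟩ = Σ xᵢ ȳᵢ. -/
def hermDual (S : Set (Fin 10 → F)) : Set (Fin 10 → F) :=
  { x | ∀ c ∈ S, ∑ i, x i * (c i) ^ 2 = 0 }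

/-- The Hermitian self-dual [10,5,4] code E₁₀ over GF(4). -/
def E10 (ω : F) : Submodule F (Fin 10 → F) :=
  Submodule.span F {![1,1,1,1,0,0,0,0,0,0], ![0,0,1,1,1,1,0,0,0,0],
    ![0,0,0,0,1,1,1,1,0,0], ![0,0,0,0,0,0,1,1,1,1],
    ![1,0,1,0,1,0,1,0,ω,ω^2]}

/-- The Hermitian self-dual [10,5,4] code B₁₀ over GF(4). -/
def B10 (ω : F) : Submodule F (Fin 10 → F) :=
  Submodule.span F {![1,1,1,1,0,0,0,0,0,0], ![0,1,ω,ω^2,1,0,0,0,0,0],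
    ![0,0,0,0,0,1,1,1,1,0], ![0,0,0,0,0,0,1,ω,ω^2,1],
    ![0,1,ω^2,ω,0,0,1,ω^2,ω,0]}

/-- Interpret a bit as an element of GF(4). -/
def b2f (x : ZMod 2) : F := if x = 1 then 1 else 0

/-- The projection 𝔽₂⁴⁰ → GF(4)¹⁰ : column j ↦ v₂ᵢₙ·1 + v·ω + v·ϖ with row labels 0,1,ω,ϖ. -/
def Proj (ω : F) (v : Fin 40 → ZMod 2) : Fin 10 → F := fun j =>
  b2f (v (idx j 1)) * 1 + b2f (v (idx j 2)) * ω + b2f (v (idx j 3)) * ω ^ 2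

/-- The parity of column j (1 = odd number of ones). -/
def colPar (v : Fin 40 → ZMod 2) (j : Fin 10) : ZMod 2 := ∑ k, v (idx j k)

/-- The parity of the top row (1 = odd number of ones). -/
def topPar (v : Fin 40 → ZMod 2) : ZMod 2 := ∑ j, v (idx j 0)

/-- The coordinate permutation of Fin 10 permuting the five blocks {2m, 2m+1}
as units according to π, preserving order within blocks. -/
def blockPerm (π : Equiv.Perm (Fin 5)) : Fin 10 → Fin 10 := fun t =>
  ⟨2 * (π ⟨t.val / 2, by have := t.isLt; omega⟩).val + t.val % 2, by
    have := (π ⟨t.val / 2, by have := t.isLt; omega⟩).isLt; have := t.isLt; omega⟩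

/-- The coordinate permutation of Fin 10 interchanging the two coordinates within
each block belonging to S, fixing all other coordinates. -/
def blockSwap (S : Finset (Fin 5)) : Fin 10 → Fin 10 := fun t =>
  if (⟨t.val / 2, by have := t.isLt; omega⟩ : Fin 5) ∈ S then
    ⟨2 * (t.val / 2) + (1 - t.val % 2), by have := t.isLt; omega⟩
  else t

end Defs


section Aux

/-- Concrete model of GF(4): pairs over ZMod 2, (a,b) represents a + b*ω. -/
abbrev G4 : Type := ZMod 2 × ZMod 2

/-- Multiplication in the concrete model. -/
def mul4 (x y : G4) : G4 :=
  (x.1 * y.1 + x.2 * y.2, x.1 * y.2 + x.2 * y.1 + x.2 * y.2)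

/-- Concrete generator matrix of B10. -/
def Mc : Fin 5 → Fin 10 → G4 :=
  ![![(1,0),(1,0),(1,0),(1,0),(0,0),(0,0),(0,0),(0,0),(0,0),(0,0)],
    ![(0,0),(1,0),(0,1),(1,1),(1,0),(0,0),(0,0),(0,0),(0,0),(0,0)],
    ![(0,0),(0,0),(0,0),(0,0),(0,0),(1,0),(1,0),(1,0),(1,0),(0,0)],
    ![(0,0),(0,0),(0,0),(0,0),(0,0),(0,0),(1,0),(0,1),(1,1),(1,0)],
    ![(0,0),(1,0),(1,1),(0,1),(0,0),(0,0),(1,0),(1,1),(0,1),(0,0)]]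

/-- A concrete codeword of B10. -/
def wt (c0 c1 c2 c3 c4 : G4) : Fin 10 → G4 := fun i =>
  mul4 c0 (Mc 0 i) + mul4 c1 (Mc 1 i) + mul4 c2 (Mc 2 i) + mul4 c3 (Mc 3 i) +
    mul4 c4 (Mc 4 i)

lemma L_orth : ∀ i j : Fin 5,
    ∑ k : Fin 10, mul4 (Mc i k) (mul4 (Mc j k) (Mc j k)) = 0 := by decide

set_option maxRecDepth 100000 in
set_option maxHeartbeats 1000000 in
lemma L_min : ∀ c0 c1 c2 c3 c4 : G4,
    wt c0 c1 c2 c3 c4 ≠ 0 → 4 ≤ hammingNorm (wt c0 c1 c2 c3 c4) := by decide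

lemma L_w4 : hammingNorm (Mc 0) = 4 := by decide

section Vec
variable {α : Type*} (a0 a1 a2 a3 a4 a5 a6 a7 a8 a9 : α)

lemma v10_0 : ![a0,a1,a2,a3,a4,a5,a6,a7,a8,a9] (0 : Fin 10) = a0 := rfl
lemma v10_1 : ![a0,a1,a2,a3,a4,a5,a6,a7,a8,a9] (1 : Fin 10) = a1 := rfl
lemma v10_2 : ![a0,a1,a2,a3,a4,a5,a6,a7,a8,a9] (2 : Fin 10) = a2 := rfl
lemma v10_3 : ![a0,a1,a2,a3,a4,a5,a6,a7,a8,a9] (3 : Fin 10) = a3 := rfl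
lemma v10_4 : ![a0,a1,a2,a3,a4,a5,a6,a7,a8,a9] (4 : Fin 10) = a4 := rfl
lemma v10_5 : ![a0,a1,a2,a3,a4,a5,a6,a7,a8,a9] (5 : Fin 10) = a5 := rfl
lemma v10_6 : ![a0,a1,a2,a3,a4,a5,a6,a7,a8,a9] (6 : Fin 10) = a6 := rfl
lemma v10_7 : ![a0,a1,a2,a3,a4,a5,a6,a7,a8,a9] (7 : Fin 10) = a7 := rfl
lemma v10_8 : ![a0,a1,a2,a3,a4,a5,a6,a7,a8,a9] (8 : Fin 10) = a8 := rfl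
lemma v10_9 : ![a0,a1,a2,a3,a4,a5,a6,a7,a8,a9] (9 : Fin 10) = a9 := rfl

lemma v5_0 : ![a0,a1,a2,a3,a4] (0 : Fin 5) = a0 := rfl
lemma v5_1 : ![a0,a1,a2,a3,a4] (1 : Fin 5) = a1 := rfl
lemma v5_2 : ![a0,a1,a2,a3,a4] (2 : Fin 5) = a2 := rfl
lemma v5_3 : ![a0,a1,a2,a3,a4] (3 : Fin 5) = a3 := rfl
lemma v5_4 : ![a0,a1,a2,a3,a4] (4 : Fin 5) = a4 := rfl

lemma m10_0 : ![a0,a1,a2,a3,a4,a5,a6,a7,a8,a9] (⟨0, by omega⟩ : Fin 10) = a0 := rfl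
lemma m10_1 : ![a0,a1,a2,a3,a4,a5,a6,a7,a8,a9] (⟨1, by omega⟩ : Fin 10) = a1 := rfl
lemma m10_2 : ![a0,a1,a2,a3,a4,a5,a6,a7,a8,a9] (⟨2, by omega⟩ : Fin 10) = a2 := rfl
lemma m10_3 : ![a0,a1,a2,a3,a4,a5,a6,a7,a8,a9] (⟨3, by omega⟩ : Fin 10) = a3 := rfl
lemma m10_4 : ![a0,a1,a2,a3,a4,a5,a6,a7,a8,a9] (⟨4, by omega⟩ : Fin 10) = a4 := rfl
lemma m10_5 : ![a0,a1,a2,a3,a4,a5,a6,a7,a8,a9] (⟨5, by omega⟩ : Fin 10) = a5 := rfl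
lemma m10_6 : ![a0,a1,a2,a3,a4,a5,a6,a7,a8,a9] (⟨6, by omega⟩ : Fin 10) = a6 := rfl
lemma m10_7 : ![a0,a1,a2,a3,a4,a5,a6,a7,a8,a9] (⟨7, by omega⟩ : Fin 10) = a7 := rfl
lemma m10_8 : ![a0,a1,a2,a3,a4,a5,a6,a7,a8,a9] (⟨8, by omega⟩ : Fin 10) = a8 := rfl
lemma m10_9 : ![a0,a1,a2,a3,a4,a5,a6,a7,a8,a9] (⟨9, by omega⟩ : Fin 10) = a9 := rfl

lemma m5_0 : ![a0,a1,a2,a3,a4] (⟨0, by omega⟩ : Fin 5) = a0 := rfl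
lemma m5_1 : ![a0,a1,a2,a3,a4] (⟨1, by omega⟩ : Fin 5) = a1 := rfl
lemma m5_2 : ![a0,a1,a2,a3,a4] (⟨2, by omega⟩ : Fin 5) = a2 := rfl
lemma m5_3 : ![a0,a1,a2,a3,a4] (⟨3, by omega⟩ : Fin 5) = a3 := rfl
lemma m5_4 : ![a0,a1,a2,a3,a4] (⟨4, by omega⟩ : Fin 5) = a4 := rfl

end Vec

variable {F : Type} [Field F] [DecidableEq F]

/-- The transfer map G4 → F. -/
def phiF (ω : F) (p : G4) : F := b2f p.1 + b2f p.2 * ω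

lemma zmod2_cases : ∀ z : ZMod 2, z = 0 ∨ z = 1 := by decide

lemma b2f_add (h2 : (2:F) = 0) (x y : ZMod 2) :
    (b2f (x + y) : F) = b2f x + b2f y := by
  rcases zmod2_cases x with rfl | rfl <;> rcases zmod2_cases y with rfl | rfl <;>
    simp [b2f, show ((1:ZMod 2) + 1) = 0 from by decide] <;>
    linear_combination -h2

lemma b2f_mul (x y : ZMod 2) : (b2f (x * y) : F) = b2f x * b2f y := by
  rcases zmod2_cases x with rfl | rfl <;> rcases zmod2_cases y with rfl | rfl <;>
    simp [b2f]

lemma phiF_zero (ω : F) : phiF ω 0 = 0 := by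
  simp [phiF, b2f]

lemma phiF00 (ω : F) : phiF ω ((0,0) : G4) = 0 := by norm_num [phiF, b2f]
lemma phiF10 (ω : F) : phiF ω ((1,0) : G4) = 1 := by norm_num [phiF, b2f]
lemma phiF01 (ω : F) : phiF ω ((0,1) : G4) = ω := by norm_num [phiF, b2f]
lemma phiF11 (ω : F) : phiF ω ((1,1) : G4) = 1 + ω := by norm_num [phiF, b2f]

lemma phiF_add (h2 : (2:F) = 0) (ω : F) (p q : G4) :
    phiF ω (p + q) = phiF ω p + phiF ω q := by
  simp only [phiF, Prod.fst_add, Prod.snd_add, b2f_add h2]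
  ring

lemma phiF_sum (h2 : (2:F) = 0) (ω : F) {ι : Type} (s : Finset ι) (f : ι → G4) :
    phiF ω (∑ i ∈ s, f i) = ∑ i ∈ s, phiF ω (f i) :=
  map_sum (AddMonoidHom.mk' (phiF ω) (phiF_add h2 ω)) f s

lemma phiF_mul (h2 : (2:F) = 0) {ω : F} (hω : ω ^ 2 = ω + 1) (p q : G4) :
    phiF ω (mul4 p q) = phiF ω p * phiF ω q := by
  simp only [phiF, mul4, b2f_add h2, b2f_mul]
  linear_combination (b2f p.2 * b2f q.2 : F) * hω +
    (b2f p.2 * b2f q.2 * (1 + ω - ω ^ 2) : F) * h2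

lemma phiF_eq_zero (h2 : (2:F) = 0) {ω : F} (hω : ω ^ 2 = ω + 1) (p : G4) :
    phiF ω p = 0 ↔ p = 0 := by
  refine ⟨?_, fun h => h ▸ phiF_zero ω⟩
  obtain ⟨x, y⟩ := p
  intro h
  rcases zmod2_cases x with rfl | rfl <;> rcases zmod2_cases y with rfl | rfl <;>
    simp only [phiF, b2f] at h ⊢
  · rfl
  · exfalso
    norm_num at h
    exact absurd (by linear_combination -hω + (ω - 1) * h : (1:F) = 0) one_ne_zero
  · exfalso
    norm_num at h
  · exfalso
    norm_num at h
    exact absurd (by linear_combination hω - (ω - 2) * h : (1:F) = 0) one_ne_zero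

lemma two_zero [Fintype F] (hF : Fintype.card F = 4) : (2:F) = 0 := by
  have h4 : (4:F) = 0 := by
    have := FiniteField.cast_card_eq_zero F
    rw [hF] at this
    exact_mod_cast this
  have hm : (2:F) * 2 = 0 := by linear_combination h4
  rcases mul_eq_zero.mp hm with h | h <;> exact h

lemma phiF_surj [Fintype F] (hF : Fintype.card F = 4) {ω : F} (hω : ω ^ 2 = ω + 1) :
    Function.Surjective (phiF ω) := by
  have h2 := two_zero hF
  have hinj : Function.Injective (phiF ω) := by
    intro p q h
    have hd : phiF ω (p - q) = phiF ω p - phiF ω q := by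
      have h1 := phiF_add h2 ω (p - q) q
      rw [sub_add_cancel] at h1
      linear_combination -h1
    have h0 : phiF ω (p - q) = 0 := by rw [hd, h, sub_self]
    exact sub_eq_zero.mp ((phiF_eq_zero h2 hω _).mp h0)
  have hb : Function.Bijective (phiF ω) :=
    (Fintype.bijective_iff_injective_and_card _).mpr ⟨hinj, by simp [hF]⟩
  exact hb.surjective

/-- The generators of B10 via the transfer map. -/
def Gf (ω : F) : Fin 5 → Fin 10 → F := fun j i => phiF ω (Mc j i)

lemma norm_phi (h2 : (2:F) = 0) {ω : F} (hω : ω ^ 2 = ω + 1) (w : Fin 10 → G4) :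
    hammingNorm (fun i => phiF ω (w i)) = hammingNorm w := by
  unfold hammingNorm
  congr 1
  ext i
  simp only [Finset.mem_filter, Finset.mem_univ, true_and]
  exact not_congr (phiF_eq_zero h2 hω _)

lemma span_eq {ω : F} (hω : ω ^ 2 = ω + 1) :
    B10 ω = Submodule.span F (Set.range (Gf ω)) := by
  unfold B10
  congr 1
  have e0 : ![(1:F),1,1,1,0,0,0,0,0,0] = Gf ω 0 := by
    funext i; fin_cases i <;>
      simp only [Gf, Mc, v10_0, v10_1, v10_2, v10_3, v10_4, v10_5, v10_6,
        v10_7, v10_8, v10_9, v5_0, v5_1, v5_2, v5_3, v5_4,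
        m10_0, m10_1, m10_2, m10_3, m10_4, m10_5, m10_6,
        m10_7, m10_8, m10_9, m5_0, m5_1, m5_2, m5_3, m5_4,
        phiF00, phiF10, phiF01, phiF11] <;>
      linear_combination hω
  have e1 : ![(0:F),1,ω,ω^2,1,0,0,0,0,0] = Gf ω 1 := by
    funext i; fin_cases i <;>
      simp only [Gf, Mc, v10_0, v10_1, v10_2, v10_3, v10_4, v10_5, v10_6,
        v10_7, v10_8, v10_9, v5_0, v5_1, v5_2, v5_3, v5_4,
        m10_0, m10_1, m10_2, m10_3, m10_4, m10_5, m10_6,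
        m10_7, m10_8, m10_9, m5_0, m5_1, m5_2, m5_3, m5_4,
        phiF00, phiF10, phiF01, phiF11] <;>
      linear_combination hω
  have e2 : ![(0:F),0,0,0,0,1,1,1,1,0] = Gf ω 2 := by
    funext i; fin_cases i <;>
      simp only [Gf, Mc, v10_0, v10_1, v10_2, v10_3, v10_4, v10_5, v10_6,
        v10_7, v10_8, v10_9, v5_0, v5_1, v5_2, v5_3, v5_4,
        m10_0, m10_1, m10_2, m10_3, m10_4, m10_5, m10_6,
        m10_7, m10_8, m10_9, m5_0, m5_1, m5_2, m5_3, m5_4,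
        phiF00, phiF10, phiF01, phiF11] <;>
      linear_combination hω
  have e3 : ![(0:F),0,0,0,0,0,1,ω,ω^2,1] = Gf ω 3 := by
    funext i; fin_cases i <;>
      simp only [Gf, Mc, v10_0, v10_1, v10_2, v10_3, v10_4, v10_5, v10_6,
        v10_7, v10_8, v10_9, v5_0, v5_1, v5_2, v5_3, v5_4,
        m10_0, m10_1, m10_2, m10_3, m10_4, m10_5, m10_6,
        m10_7, m10_8, m10_9, m5_0, m5_1, m5_2, m5_3, m5_4,
        phiF00, phiF10, phiF01, phiF11] <;>
      linear_combination hω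
  have e4 : ![(0:F),1,ω^2,ω,0,0,1,ω^2,ω,0] = Gf ω 4 := by
    funext i; fin_cases i <;>
      simp only [Gf, Mc, v10_0, v10_1, v10_2, v10_3, v10_4, v10_5, v10_6,
        v10_7, v10_8, v10_9, v5_0, v5_1, v5_2, v5_3, v5_4,
        m10_0, m10_1, m10_2, m10_3, m10_4, m10_5, m10_6,
        m10_7, m10_8, m10_9, m5_0, m5_1, m5_2, m5_3, m5_4,
        phiF00, phiF10, phiF01, phiF11] <;>
      linear_combination hω
  rw [e0, e1, e2, e3, e4]
  ext x
  simp only [Set.mem_insert_iff, Set.mem_singleton_iff, Set.mem_range]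
  constructor
  · rintro (rfl | rfl | rfl | rfl | rfl)
    exacts [⟨0, rfl⟩, ⟨1, rfl⟩, ⟨2, rfl⟩, ⟨3, rfl⟩, ⟨4, rfl⟩]
  · rintro ⟨j, rfl⟩
    fin_cases j <;> simp

end Aux



/-- B₁₀ is a Hermitian self-dual [10,5,4] linear code over GF(4). -/
theorem stmt_5 (F : Type) [Field F] [Fintype F] [DecidableEq F]
    (hF : Fintype.card F = 4) (ω : F) (hω : ω ^ 2 = ω + 1) :
    Module.finrank F ↥(B10 ω) = 5 ∧
    (B10 ω : Set (Fin 10 → F)) = hermDual (B10 ω : Set (Fin 10 → F)) ∧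
    (∀ v ∈ B10 ω, v ≠ 0 → 4 ≤ hammingNorm v) ∧
    (∃ v ∈ B10 ω, hammingNorm v = 4) := by
    classical
  have h2 : (2:F) = 0 := two_zero hF
  have hchar : CharP F 2 := by
    have hdvd : ringChar F ∣ 2 := (ringChar.spec F 2).mp (by exact_mod_cast h2)
    have h1 : ringChar F ≠ 1 := by
      intro h1
      have hd : ringChar F ∣ 1 := by rw [h1]
      have := (ringChar.spec F 1).mpr hd
      simp at this
    rcases (Nat.dvd_prime Nat.prime_two).mp hdvd with h | h
    · exact absurd h h1
    · exact h ▸ ringChar.charP F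
  haveI := hchar
  have hGmem : ∀ j, Gf ω j ∈ B10 ω := fun j => by
    rw [span_eq hω]; exact Submodule.subset_span ⟨j, rfl⟩
  have hmem_iff : ∀ v, v ∈ B10 ω ↔ ∃ a : Fin 5 → F, ∑ j, a j • Gf ω j = v := by
    intro v; rw [span_eq hω, Submodule.mem_span_range_iff_exists_fun]
  -- the linear map cutting out the Hermitian dual of B10
  let L : (Fin 10 → F) →ₗ[F] (Fin 5 → F) :=
    { toFun := fun x j => ∑ i, x i * (Gf ω j i) ^ 2
      map_add' := fun x y => by
        funext j
        simp only [Pi.add_apply, add_mul, Finset.sum_add_distrib]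
      map_smul' := fun c x => by
        funext j
        simp only [Pi.smul_apply, smul_eq_mul, RingHom.id_apply, Finset.mul_sum, mul_assoc] }
  have hLdef : ∀ x j, L x j = ∑ i, x i * (Gf ω j i) ^ 2 := fun x j => rfl
  have hBker : B10 ω ≤ LinearMap.ker L := by
    rw [span_eq hω, Submodule.span_le]
    rintro _ ⟨j', rfl⟩
    refine SetLike.mem_coe.mpr (LinearMap.mem_ker.mpr (funext fun j => ?_))
    have he : ∀ i : Fin 10, Gf ω j' i * (Gf ω j i) ^ 2
        = phiF ω (mul4 (Mc j' i) (mul4 (Mc j i) (Mc j i))) := by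
      intro i
      rw [phiF_mul h2 hω, phiF_mul h2 hω]
      simp only [Gf]
      ring
    show (∑ i, Gf ω j' i * (Gf ω j i) ^ 2) = 0
    rw [Finset.sum_congr rfl fun i _ => he i, ← phiF_sum h2, L_orth j' j, phiF_zero]
  -- linear independence of the generators
  have hli : LinearIndependent F (Gf ω) := by
    rw [Fintype.linearIndependent_iff]
    intro g hg
    have hco : ∀ i : Fin 10, ∑ j, g j * Gf ω j i = 0 := by
      intro i
      have := congrFun hg i
      simpa [Finset.sum_apply] using this
    have h0 := hco 0
    have h4 := hco 4
    have h5 := hco 5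
    have h9 := hco 9
    have h6 := hco 6
    simp only [Fin.sum_univ_five, Gf, Mc, v5_0, v5_1, v5_2, v5_3, v5_4,
      v10_0, v10_4, v10_5, v10_9, v10_6, phiF00, phiF10, phiF01, phiF11,
      mul_one, mul_zero, add_zero, zero_add] at h0 h4 h5 h9 h6
    intro i
    fin_cases i
    · exact h0
    · exact h4
    · exact h5
    · exact h9
    · show g 4 = 0
      linear_combination h6 - h5 - h9
  have hfinB : Module.finrank F ↥(B10 ω) = 5 := by
    rw [span_eq hω, finrank_span_eq_card hli]
    simp
  -- surjectivity of L
  have hkey : ∀ i0 : Fin 10, L (Pi.single i0 1) = fun j => (Gf ω j i0) ^ 2 := by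
    intro i0
    funext j
    rw [hLdef]
    rw [Finset.sum_eq_single i0]
    · simp
    · intro b _ hb
      simp [Pi.single_eq_of_ne hb]
    · intro hb
      exact absurd (Finset.mem_univ i0) hb
  have hLsurj : Function.Surjective L := by
    intro y
    refine ⟨y 0 • (Pi.single (0 : Fin 10) (1:F) : Fin 10 → F)
      + y 1 • (Pi.single (4 : Fin 10) (1:F) : Fin 10 → F)
      + (y 2 - y 4) • (Pi.single (5 : Fin 10) (1:F) : Fin 10 → F)
      + (y 3 - y 4) • (Pi.single (9 : Fin 10) (1:F) : Fin 10 → F)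
      + y 4 • (Pi.single (6 : Fin 10) (1:F) : Fin 10 → F), ?_⟩
    simp only [map_add, map_smul, hkey]
    funext j
    simp only [Pi.add_apply, Pi.smul_apply, smul_eq_mul]
    fin_cases j <;>
      simp only [Gf, Mc, v5_0, v5_1, v5_2, v5_3, v5_4, v10_0, v10_4, v10_5, v10_6, v10_9,
        m5_0, m5_1, m5_2, m5_3, m5_4, m10_0, m10_4, m10_5, m10_6, m10_9,
        phiF00, phiF10, phiF01, phiF11] <;>
      (ring_nf; try rfl)
  have hker5 : Module.finrank F ↥(LinearMap.ker L) = 5 := by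
    have hrn := LinearMap.finrank_range_add_finrank_ker L
    rw [LinearMap.range_eq_top.mpr hLsurj, finrank_top,
      Module.finrank_fintype_fun_eq_card, Module.finrank_fintype_fun_eq_card] at hrn
    simp only [Fintype.card_fin] at hrn
    omega
  have hBK : B10 ω = LinearMap.ker L :=
    Submodule.eq_of_le_of_finrank_le hBker (by rw [hker5, hfinB])
  -- hermitian dual equals ker L
  have hdual : hermDual ((B10 ω : Set (Fin 10 → F))) = (LinearMap.ker L : Set (Fin 10 → F)) := by
    ext x
    simp only [hermDual, Set.mem_setOf_eq, SetLike.mem_coe, LinearMap.mem_ker]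
    constructor
    · intro h
      funext j
      show (∑ i, x i * (Gf ω j i) ^ 2) = 0
      exact h (Gf ω j) (hGmem j)
    · intro h c hc
      obtain ⟨a, rfl⟩ := (hmem_iff c).mp hc
      have hsq : ∀ i, ((∑ j, a j • Gf ω j : Fin 10 → F) i) ^ 2
          = ∑ j, (a j) ^ 2 * (Gf ω j i) ^ 2 := by
        intro i
        simp only [Finset.sum_apply, Pi.smul_apply, smul_eq_mul]
        rw [CharTwo.sum_sq]
        exact Finset.sum_congr rfl fun j _ => by ring
      have hz : ∀ j : Fin 5, ∑ i, x i * (Gf ω j i) ^ 2 = 0 := by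
        intro j
        have := congrFun h j
        rw [hLdef] at this
        simpa using this
      calc ∑ i, x i * ((∑ j, a j • Gf ω j : Fin 10 → F) i) ^ 2
          = ∑ i, ∑ j, (a j) ^ 2 * (x i * (Gf ω j i) ^ 2) := by
            refine Finset.sum_congr rfl fun i _ => ?_
            rw [hsq i, Finset.mul_sum]
            exact Finset.sum_congr rfl fun j _ => by ring
        _ = ∑ j, (a j) ^ 2 * ∑ i, x i * (Gf ω j i) ^ 2 := by
            rw [Finset.sum_comm]
            exact Finset.sum_congr rfl fun j _ => by rw [Finset.mul_sum]
        _ = 0 := by simp [hz]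
  -- concrete representation of codewords
  have hrep : ∀ v ∈ B10 ω, ∃ cc : Fin 5 → G4,
      ∀ i, v i = phiF ω (∑ j, mul4 (cc j) (Mc j i)) := by
    intro v hv
    obtain ⟨a, ha⟩ := (hmem_iff v).mp hv
    choose cc hcc using fun j => phiF_surj hF hω (a j)
    refine ⟨cc, fun i => ?_⟩
    rw [← ha, phiF_sum h2]
    simp only [Finset.sum_apply, Pi.smul_apply, smul_eq_mul]
    refine Finset.sum_congr rfl fun j _ => ?_
    rw [phiF_mul h2 hω, hcc]
    rfl
  refine ⟨hfinB, ?_, ?_, ?_⟩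
  · rw [hdual, hBK]
  · intro v hv hvne
    obtain ⟨cc, hcc⟩ := hrep v hv
    have hwdef : (fun i => ∑ j, mul4 (cc j) (Mc j i))
        = wt (cc 0) (cc 1) (cc 2) (cc 3) (cc 4) := by
      funext i
      rw [Fin.sum_univ_five]
      rfl
    have hveq : v = fun i => phiF ω (wt (cc 0) (cc 1) (cc 2) (cc 3) (cc 4) i) := by
      funext i
      rw [hcc i, ← hwdef]
    have hwne : wt (cc 0) (cc 1) (cc 2) (cc 3) (cc 4) ≠ 0 := by
      intro h0
      apply hvne
      rw [hveq, h0]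
      funext i
      simp [phiF_zero]
    have hnorm : hammingNorm v = hammingNorm (wt (cc 0) (cc 1) (cc 2) (cc 3) (cc 4)) := by
      rw [hveq, norm_phi h2 hω]
    rw [hnorm]
    exact L_min (cc 0) (cc 1) (cc 2) (cc 3) (cc 4) hwne
  · refine ⟨Gf ω 0, hGmem 0, ?_⟩
    have hrw : Gf ω 0 = fun i => phiF ω (Mc 0 i) := rfl
    rw [hrw, norm_phi h2 hω, L_w4]
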